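/- Let A be an n×n real matrix, B an n×m real matrix, Q a symmetric positive semidefinite n×n real matrix, R a symmetric positive semidefinite m×m real matrix, and P a symmetric n×n real matrix such that R + BᵀPB is invertible and P satisfies the DARE, and let K = −(R + BᵀPB)⁻¹BᵀPA. Then for every x ∈ ℝⁿ, the value function V(x) = xᵀPx satisfies the Lyapunov decrease inequality V((A + BK)x) ≤ V(x) − xᵀQx along the closed-loop system x⁺ = (A + BK)x. -/

import Mathlib

open Matrix

theorem dare_lyapunov_decrease {n m : ℕ}
    (A : Matrix (Fin n) (Fin n) ℝ) (B : Matrix (Fin n) (Fin m) ℝ)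
    (Q P : Matrix (Fin n) (Fin n) ℝ) (R : Matrix (Fin m) (Fin m) ℝ)
    (hQ : Q.PosSemidef) (hR : R.PosSemidef) (hP : P.IsSymm)
    (hinv : IsUnit (R + Bᵀ * P * B))
    (hDARE : P = Aᵀ * P * A - Aᵀ * P * B * (R + Bᵀ * P * B)⁻¹ * (Bᵀ * P * A) + Q)
    (K : Matrix (Fin m) (Fin n) ℝ)
    (hK : K = -((R + Bᵀ * P * B)⁻¹ * (Bᵀ * P * A))) :
    ∀ x : Fin n → ℝ,
      ((A + B * K).mulVec x) ⬝ᵥ P.mulVec ((A + B * K).mulVec x) ≤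
        x ⬝ᵥ P.mulVec x - x ⬝ᵥ Q.mulVec x := by
  intro x
  have hdet : IsUnit (R + Bᵀ * P * B).det := (Matrix.isUnit_iff_isUnit_det _).mp hinv
  have hPs : Pᵀ = P := hP
  have hRs : Rᵀ = R := hR.1
  have hSsymm : (R + Bᵀ * P * B)ᵀ = R + Bᵀ * P * B := by
    simp [Matrix.transpose_add, Matrix.transpose_mul, hPs, hRs, Matrix.mul_assoc]
  have hSinv_symm : ((R + Bᵀ * P * B)⁻¹)ᵀ = (R + Bᵀ * P * B)⁻¹ := by
    rw [Matrix.transpose_nonsing_inv, hSsymm]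
  have hNT : (Bᵀ * P * A)ᵀ = Aᵀ * P * B := by
    simp [Matrix.transpose_mul, hPs, Matrix.mul_assoc]
  have hKT : Kᵀ = -(Aᵀ * P * B * (R + Bᵀ * P * B)⁻¹) := by
    rw [hK]; simp [Matrix.transpose_mul, hSinv_symm, hNT]
  have expand : (A + B * K)ᵀ * P * (A + B * K) =
      Aᵀ * P * A + Aᵀ * P * B * K + Kᵀ * (Bᵀ * P * A) + Kᵀ * (Bᵀ * P * B) * K := by
    simp only [Matrix.transpose_add, Matrix.transpose_mul, Matrix.add_mul, Matrix.mul_add,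
      Matrix.mul_assoc]
    abel
  have h1 : Aᵀ * P * B * K = -(Aᵀ * P * B * (R + Bᵀ * P * B)⁻¹ * (Bᵀ * P * A)) := by
    rw [hK]; simp [Matrix.mul_assoc]
  have h2 : Kᵀ * (Bᵀ * P * A) = -(Aᵀ * P * B * (R + Bᵀ * P * B)⁻¹ * (Bᵀ * P * A)) := by
    rw [hKT]; simp [Matrix.mul_assoc]
  have hSK : (R + Bᵀ * P * B) * K = -(Bᵀ * P * A) := by
    rw [hK, Matrix.mul_neg, Matrix.mul_nonsing_inv_cancel_left _ _ hdet]
  have h3 : Kᵀ * (Bᵀ * P * B) * K =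
      Aᵀ * P * B * (R + Bᵀ * P * B)⁻¹ * (Bᵀ * P * A) - Kᵀ * R * K := by
    have e1 : Kᵀ * (Bᵀ * P * B) * K = Kᵀ * ((R + Bᵀ * P * B) * K) - Kᵀ * R * K := by
      rw [Matrix.add_mul, Matrix.mul_add]
      simp only [Matrix.mul_assoc]
      abel
    rw [e1, hSK, Matrix.mul_neg, h2, neg_neg]
  have hM : Aᵀ * P * A - Aᵀ * P * B * (R + Bᵀ * P * B)⁻¹ * (Bᵀ * P * A) = P - Q := by
    conv_rhs => rw [hDARE]
    abel
  have hkey : (A + B * K)ᵀ * P * (A + B * K) = P - Q - Kᵀ * R * K := by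
    rw [expand, h1, h2, h3, ← hM]
    abel
  have hdp : ((A + B * K).mulVec x) ⬝ᵥ P.mulVec ((A + B * K).mulVec x) =
      x ⬝ᵥ ((A + B * K)ᵀ * P * (A + B * K)).mulVec x := by
    simp only [← Matrix.mulVec_mulVec, Matrix.dotProduct_mulVec, Matrix.vecMul_transpose]
  have hRterm : 0 ≤ x ⬝ᵥ (Kᵀ * R * K).mulVec x := by
    have e : x ⬝ᵥ (Kᵀ * R * K).mulVec x = (K.mulVec x) ⬝ᵥ R.mulVec (K.mulVec x) := by
      simp only [← Matrix.mulVec_mulVec, Matrix.dotProduct_mulVec, Matrix.vecMul_transpose]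
    rw [e]
    simpa using hR.dotProduct_mulVec_nonneg (K.mulVec x)
  rw [hdp, hkey]
  have e2 : (P - Q - Kᵀ * R * K).mulVec x = P.mulVec x - Q.mulVec x - (Kᵀ * R * K).mulVec x := by
    simp [Matrix.sub_mulVec]
  rw [e2]
  simp only [dotProduct_sub]
  linarith
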